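/- If x_a ≥ x_θ ≥ 0 and x_b ≥ 0, then Γ(x_a, x_b, x_θ) / (2·P(x_a, x_b, x_θ)) ≤ (x_a + √(2/π)) / 2. -/

import Mathlib

open MeasureTheory Real Filter
open scoped Topology

/-- Standard one-dimensional Gaussian pdf. -/
noncomputable def phi1 (x : ℝ) : ℝ := (Real.sqrt (2 * π))⁻¹ * Real.exp (-x ^ 2 / 2)

/-- `w(y, b) = e^{yb}/(e^{yb} + e^{−yb})`. -/
noncomputable def wgt (y b : ℝ) : ℝ :=
  Real.exp (y * b) / (Real.exp (y * b) + Real.exp (-(y * b)))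

/-- `P(x_a, x_b, x_θ) = ∫ w(y − x_a, x_b)·(φ(y − x_θ) + φ(y + x_θ))/2 dy`. -/
noncomputable def Pfun (xa xb xθ : ℝ) : ℝ :=
  ∫ y, wgt (y - xa) xb * ((phi1 (y - xθ) + phi1 (y + xθ)) / 2)

/-- `Γ(x_a, x_b, x_θ) = ∫ w(y − x_a, x_b)·y·(φ(y − x_θ) + φ(y + x_θ))/2 dy`. -/
noncomputable def Gfun (xa xb xθ : ℝ) : ℝ :=
  ∫ y, wgt (y - xa) xb * y * ((phi1 (y - xθ) + phi1 (y + xθ)) / 2)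

/-- `F(x_b, x_θ) = ∫ (2 w(y + x_θ, x_b) − 1)·(y + x_θ)·φ(y) dy`. -/
noncomputable def Ffun (xb xθ : ℝ) : ℝ :=
  ∫ y, (2 * wgt (y + xθ) xb - 1) * (y + xθ) * phi1 y

/-- Standard Gaussian cdf. -/
noncomputable def PhiCdf (x : ℝ) : ℝ := ∫ y in Set.Iic x, phi1 y

/-! ### Auxiliary development -/

noncomputable def cst : ℝ := Real.sqrt (2 / π)

lemma cst_pos : 0 < cst := Real.sqrt_pos.2 (by positivity)

noncomputable def Qg (s : ℝ) : ℝ := ∫ t in Set.Ioi s, Real.exp (-t ^ 2 / 2)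

lemma intexp : Integrable (fun t : ℝ => Real.exp (-t ^ 2 / 2)) := by
  have h := integrable_exp_neg_mul_sq (by norm_num : (0:ℝ) < 1/2)
  exact h.congr (Filter.Eventually.of_forall fun t => congrArg Real.exp (by ring))

lemma intexp4 : Integrable (fun t : ℝ => Real.exp (-t ^ 2 / 4)) := by
  have h := integrable_exp_neg_mul_sq (by norm_num : (0:ℝ) < 1/4)
  exact h.congr (Filter.Eventually.of_forall fun t => congrArg Real.exp (by ring))

lemma abs_mul_exp_le (t : ℝ) : |t| * Real.exp (-t ^ 2 / 2) ≤ Real.exp (-t ^ 2 / 4) := by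
  have h1 : |t| ≤ Real.exp (t ^ 2 / 4) := by
    have h := Real.add_one_le_exp (t ^ 2 / 4)
    nlinarith [abs_nonneg t, sq_abs t, sq_nonneg (|t| - 2)]
  calc |t| * Real.exp (-t ^ 2 / 2) ≤ Real.exp (t^2/4) * Real.exp (-t^2/2) :=
        mul_le_mul_of_nonneg_right h1 (Real.exp_pos _).le
    _ = Real.exp (-t^2/4) := by rw [← Real.exp_add]; ring_nf

lemma inttexp : Integrable (fun t : ℝ => t * Real.exp (-t ^ 2 / 2)) := by
  refine intexp4.mono' ?_ (Filter.Eventually.of_forall fun t => ?_)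
  · exact (continuous_id.mul (by continuity)).aestronglyMeasurable
  · rw [norm_mul, Real.norm_eq_abs, Real.norm_eq_abs, abs_of_pos (Real.exp_pos _)]
    exact abs_mul_exp_le t

lemma tendsto_exp_negsq : Tendsto (fun y : ℝ => Real.exp (-y ^ 2 / 2)) atTop (𝓝 0) := by
  apply Real.tendsto_exp_atBot.comp
  have h1 : Tendsto (fun y : ℝ => y ^ 2 / 2) atTop atTop :=
    (tendsto_pow_atTop (by norm_num)).atTop_div_const (by norm_num)
  have h2 : Tendsto (fun y : ℝ => -(y ^ 2 / 2)) atTop atBot := tendsto_neg_atBot_iff.2 h1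
  exact h2.congr fun y => by ring

lemma FTC_texp (s : ℝ) : ∫ t in Set.Ioi s, t * Real.exp (-t ^ 2 / 2) = Real.exp (-s ^ 2 / 2) := by
  have hd : ∀ x ∈ Set.Ici s, HasDerivAt (fun y : ℝ => -Real.exp (-y ^ 2 / 2))
      (x * Real.exp (-x ^ 2 / 2)) x := by
    intro x _
    have h1 : HasDerivAt (fun y : ℝ => -y ^ 2 / 2) (-x) x := by
      have := ((hasDerivAt_pow 2 x).neg).div_const 2
      simpa using this.congr_deriv (by push_cast; ring)
    have h2 := (h1.exp).neg
    exact h2.congr_deriv (by ring)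
  have htend : Tendsto (fun y : ℝ => -Real.exp (-y ^ 2 / 2)) atTop (𝓝 0) := by
    have h := tendsto_exp_negsq.neg
    rwa [neg_zero] at h
  have := integral_Ioi_of_hasDerivAt_of_tendsto' hd inttexp.integrableOn htend
  simpa using this

lemma Qg_nonneg (s : ℝ) : 0 ≤ Qg s :=
  setIntegral_nonneg measurableSet_Ioi fun t _ => (Real.exp_pos _).le

lemma Qg_anti : Antitone Qg := by
  intro a b hab
  exact setIntegral_mono_set intexp.integrableOn
    (Filter.Eventually.of_forall fun t => (Real.exp_pos _).le)
    ((Set.Ioi_subset_Ioi hab).eventuallyLE)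

lemma mills {s : ℝ} (hs : 0 < s) : Qg s ≤ Real.exp (-s ^ 2 / 2) / s := by
  have h1 : Qg s ≤ ∫ t in Set.Ioi s, (t * Real.exp (-t ^ 2 / 2)) / s := by
    refine setIntegral_mono_on intexp.integrableOn (inttexp.div_const s).integrableOn
      measurableSet_Ioi fun t ht => ?_
    rw [Set.mem_Ioi] at ht
    rw [le_div_iff₀ hs]
    have := (Real.exp_pos (-t^2/2)).le
    nlinarith
  rwa [integral_div, FTC_texp] at h1

lemma Qg_eq (s : ℝ) : Qg s = Qg 0 - ∫ t in (0:ℝ)..s, Real.exp (-t ^ 2 / 2) := by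
  have h := intervalIntegral.integral_Iic_sub_Iic (a := (0:ℝ)) (b := s)
    intexp.integrableOn intexp.integrableOn
  have h0 := intervalIntegral.integral_Iic_add_Ioi (b := (0:ℝ)) intexp.integrableOn intexp.integrableOn
  have hs := intervalIntegral.integral_Iic_add_Ioi (b := s) intexp.integrableOn intexp.integrableOn
  unfold Qg
  linarith [h, h0, hs]

lemma hasDerivAt_Qg (s : ℝ) : HasDerivAt Qg (-Real.exp (-s ^ 2 / 2)) s := by
  have hc : Continuous (fun t : ℝ => Real.exp (-t ^ 2 / 2)) := by continuity
  have h1 : HasDerivAt (fun u : ℝ => ∫ t in (0:ℝ)..u, Real.exp (-t ^ 2 / 2))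
      (Real.exp (-s ^ 2 / 2)) s :=
    intervalIntegral.integral_hasDerivAt_right (intexp.intervalIntegrable)
      (hc.stronglyMeasurableAtFilter _ _) hc.continuousAt
  have h2 := (hasDerivAt_const s (Qg 0)).sub h1
  have h3 : Qg = fun u => Qg 0 - ∫ t in (0:ℝ)..u, Real.exp (-t ^ 2 / 2) := funext Qg_eq
  rw [h3]
  exact h2.congr_deriv (by ring)

lemma Qg_continuous : Continuous Qg :=
  continuous_iff_continuousAt.2 fun s => (hasDerivAt_Qg s).continuousAt

lemma Qg_zero : Qg 0 = Real.sqrt (π / 2) := by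
  have h := integral_gaussian_Ioi (1/2)
  unfold Qg
  rw [show (fun t : ℝ => Real.exp (-t ^ 2 / 2)) = fun t => Real.exp (-(1/2) * t ^ 2) from
    funext fun t => by ring_nf]
  rw [h]
  rw [show π / (1/2 : ℝ) = 2 ^ 2 * (π / 2) by ring,
    Real.sqrt_mul (by positivity), Real.sqrt_sq (by norm_num)]
  ring

lemma cst_mul : cst * Real.sqrt (π / 2) = 1 := by
  rw [cst, ← Real.sqrt_mul (by positivity)]
  rw [show (2/π) * (π/2) = 1 by field_simp]
  exact Real.sqrt_one

lemma sqrt_pi_half_le : Real.sqrt (π / 2) ≤ 3/2 := by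
  rw [show (3/2 : ℝ) = Real.sqrt ((3/2)^2) from (Real.sqrt_sq (by norm_num)).symm]
  exact Real.sqrt_le_sqrt (by nlinarith [Real.pi_le_four])

lemma intQg : IntegrableOn Qg (Set.Ioi (0:ℝ)) := by
  refine Integrable.mono' (g := fun y => 3 * Real.exp (-(1/2) * y))
    ((exp_neg_integrableOn_Ioi 0 (by norm_num : (0:ℝ) < 1/2)).const_mul 3)
    (Qg_continuous.aestronglyMeasurable.restrict) ?_
  rw [ae_restrict_iff' measurableSet_Ioi]
  refine Filter.Eventually.of_forall fun y hy => ?_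
  rw [Set.mem_Ioi] at hy
  rw [Real.norm_eq_abs, abs_of_nonneg (Qg_nonneg y)]
  rcases le_or_gt y 1 with hy1 | hy1
  · have h1 : Qg y ≤ Qg 0 := Qg_anti hy.le
    have h2 : Real.exp (-(1/2) * y) ≥ 1/2 := by
      have := Real.add_one_le_exp (-(1/2) * y)
      nlinarith
    rw [Qg_zero] at h1
    nlinarith [sqrt_pi_half_le]
  · have h1 : Qg y ≤ Real.exp (-y ^ 2 / 2) / y := mills (by linarith)
    have h2 : Real.exp (-y ^ 2 / 2) / y ≤ Real.exp (-y ^ 2 / 2) := by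
      rw [div_le_iff₀ (by linarith)]
      nlinarith [(Real.exp_pos (-y^2/2)).le]
    have h3 : Real.exp (-y ^ 2 / 2) ≤ Real.exp (-(1/2) * y) := by
      apply Real.exp_le_exp.2; nlinarith
    nlinarith [(Real.exp_pos (-(1/2) * y)).le]

lemma tendsto_mul_Qg : Tendsto (fun y : ℝ => y * Qg y) atTop (𝓝 0) := by
  apply tendsto_of_tendsto_of_tendsto_of_le_of_le' tendsto_const_nhds tendsto_exp_negsq
  · filter_upwards [eventually_ge_atTop (1:ℝ)] with y hy
    exact mul_nonneg (by linarith) (Qg_nonneg y)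
  · filter_upwards [eventually_ge_atTop (1:ℝ)] with y hy
    have h1 := mills (show (0:ℝ) < y by linarith)
    calc y * Qg y ≤ y * (Real.exp (-y ^ 2 / 2) / y) :=
          mul_le_mul_of_nonneg_left h1 (by linarith)
      _ = Real.exp (-y ^ 2 / 2) := by field_simp

lemma tendsto_Qg : Tendsto Qg atTop (𝓝 0) := by
  apply tendsto_of_tendsto_of_tendsto_of_le_of_le' tendsto_const_nhds tendsto_exp_negsq
  · exact Filter.Eventually.of_forall fun y => Qg_nonneg y
  · filter_upwards [eventually_ge_atTop (1:ℝ)] with y hy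
    have h1 := mills (show (0:ℝ) < y by linarith)
    have h2 : Real.exp (-y ^ 2 / 2) / y ≤ Real.exp (-y ^ 2 / 2) := by
      rw [div_le_iff₀ (by linarith)]
      nlinarith [(Real.exp_pos (-y^2/2)).le]
    linarith

lemma int_Qg_val : ∫ y in Set.Ioi (0:ℝ), Qg y = 1 := by
  have hd : ∀ x ∈ Set.Ici (0:ℝ),
      HasDerivAt (fun y : ℝ => y * Qg y - Real.exp (-y ^ 2 / 2)) (Qg x) x := by
    intro x _
    have h1 : HasDerivAt (fun y : ℝ => -y ^ 2 / 2) (-x) x := by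
      have := ((hasDerivAt_pow 2 x).neg).div_const 2
      simpa using this.congr_deriv (by push_cast; ring)
    have h2 := ((hasDerivAt_id x).mul (hasDerivAt_Qg x)).sub h1.exp
    exact h2.congr_deriv (by simp only [id_eq]; ring)
  have htend : Tendsto (fun y : ℝ => y * Qg y - Real.exp (-y ^ 2 / 2)) atTop (𝓝 0) := by
    simpa using tendsto_mul_Qg.sub tendsto_exp_negsq
  have := integral_Ioi_of_hasDerivAt_of_tendsto' hd intQg htend
  simpa using this

noncomputable def ug (y : ℝ) : ℝ := cst * Real.exp (-y ^ 2 / 2) - Qg y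

lemma hasDerivAt_ug (y : ℝ) :
    HasDerivAt ug ((1 - cst * y) * Real.exp (-y ^ 2 / 2)) y := by
  have h1 : HasDerivAt (fun x : ℝ => -x ^ 2 / 2) (-y) y := by
    have := ((hasDerivAt_pow 2 y).neg).div_const 2
    simpa using this.congr_deriv (by push_cast; ring)
  have h2 := (h1.exp.const_mul cst).sub (hasDerivAt_Qg y)
  exact h2.congr_deriv (by ring)

lemma ug_continuous : Continuous ug :=
  continuous_iff_continuousAt.2 fun s => (hasDerivAt_ug s).continuousAt

lemma ug_mono : MonotoneOn ug (Set.Icc 0 cst⁻¹) := by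
  apply monotoneOn_of_deriv_nonneg (convex_Icc _ _) ug_continuous.continuousOn
    (fun x _ => (hasDerivAt_ug x).differentiableAt.differentiableWithinAt)
  intro x hx
  rw [interior_Icc, Set.mem_Ioo] at hx
  rw [(hasDerivAt_ug x).deriv]
  have h1 : cst * x ≤ 1 := by
    have := mul_le_mul_of_nonneg_left hx.2.le cst_pos.le
    rwa [mul_inv_cancel₀ cst_pos.ne'] at this
  have := (Real.exp_pos (-x^2/2)).le
  nlinarith

lemma ug_nonneg_far {y : ℝ} (hy : cst⁻¹ ≤ y) : 0 ≤ ug y := by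
  have hy0 : 0 < y := lt_of_lt_of_le (inv_pos.2 cst_pos) hy
  have h1 : Qg y ≤ Real.exp (-y ^ 2 / 2) / y := mills hy0
  have h2 : y⁻¹ ≤ cst := by
    rw [← inv_inv cst]
    exact inv_anti₀ (inv_pos.2 cst_pos) hy
  have h3 : Real.exp (-y ^ 2 / 2) / y ≤ cst * Real.exp (-y ^ 2 / 2) := by
    rw [div_eq_mul_inv, mul_comm]
    exact mul_le_mul_of_nonneg_right h2 (Real.exp_pos _).le
  unfold ug
  linarith

lemma int_ug : IntegrableOn ug (Set.Ioi (0:ℝ)) :=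
  ((intexp.const_mul cst).integrableOn).sub intQg

lemma int_ug_zero : ∫ y in Set.Ioi (0:ℝ), ug y = 0 := by
  unfold ug
  rw [integral_sub ((intexp.const_mul cst).integrableOn) intQg, integral_const_mul, int_Qg_val]
  have : ∫ y in Set.Ioi (0:ℝ), Real.exp (-y ^ 2 / 2) = Qg 0 := rfl
  rw [this, Qg_zero, cst_mul]
  ring

lemma key_Q {s : ℝ} (hs : 0 ≤ s) : Real.exp (-s ^ 2 / 2) ≤ (s + cst) * Qg s := by
  have hugint : IntegrableOn ug (Set.Ioi s) := int_ug.mono_set (Set.Ioi_subset_Ioi hs)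
  have hF : ∫ y in Set.Ioi s, ug y = (s + cst) * Qg s - Real.exp (-s ^ 2 / 2) := by
    have hd : ∀ x ∈ Set.Ici s,
        HasDerivAt (fun y : ℝ => Real.exp (-y ^ 2 / 2) - (y + cst) * Qg y) (ug x) x := by
      intro x _
      have h1 : HasDerivAt (fun x : ℝ => -x ^ 2 / 2) (-x) x := by
        have := ((hasDerivAt_pow 2 x).neg).div_const 2
        simpa using this.congr_deriv (by push_cast; ring)
      have h2 := h1.exp.sub (((hasDerivAt_id x).add_const cst).mul (hasDerivAt_Qg x))
      refine h2.congr_deriv ?_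
      simp only [id_eq, ug]; ring
    have htend : Tendsto (fun y : ℝ => Real.exp (-y ^ 2 / 2) - (y + cst) * Qg y)
        atTop (𝓝 0) := by
      have h1 : Tendsto (fun y : ℝ => (y + cst) * Qg y) atTop (𝓝 0) := by
        have := tendsto_mul_Qg.add (tendsto_Qg.const_mul cst)
        simp only [mul_zero, add_zero] at this
        refine this.congr fun y => by ring
      simpa using tendsto_exp_negsq.sub h1
    have := integral_Ioi_of_hasDerivAt_of_tendsto' hd hugint htend
    rw [this]; ring
  have hnn : 0 ≤ ∫ y in Set.Ioi s, ug y := by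
    rcases le_or_gt cst⁻¹ s with hc | hc
    · exact setIntegral_nonneg measurableSet_Ioi fun y hy =>
        ug_nonneg_far (le_trans hc (le_of_lt hy))
    · rcases le_or_gt 0 (ug s) with hu | hu
      · refine setIntegral_nonneg measurableSet_Ioi fun y hy => ?_
        rw [Set.mem_Ioi] at hy
        rcases le_or_gt y cst⁻¹ with hy2 | hy2
        · exact le_trans hu (ug_mono ⟨hs, hc.le⟩ ⟨by linarith, hy2⟩ hy.le)
        · exact ug_nonneg_far hy2.le
      · have hsplit : ∫ y in Set.Ioi (0:ℝ), ug y
            = (∫ y in Set.Ioc 0 s, ug y) + ∫ y in Set.Ioi s, ug y := by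
          rw [← setIntegral_union (Set.Ioc_disjoint_Ioi le_rfl) measurableSet_Ioi
            (int_ug.mono_set Set.Ioc_subset_Ioi_self) hugint, Set.Ioc_union_Ioi_eq_Ioi hs]
        have hneg : ∫ y in Set.Ioc 0 s, ug y ≤ 0 := by
          apply setIntegral_nonpos measurableSet_Ioc
          intro y hy
          rw [Set.mem_Ioc] at hy
          have := ug_mono ⟨hy.1.le, by linarith⟩ ⟨hs, hc.le⟩ hy.2
          linarith
        have := int_ug_zero
        linarith
  linarith [hF ▸ hnn]

lemma shift_Ioi (f : ℝ → ℝ) (a s : ℝ) :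
    ∫ x in Set.Ioi s, f (x + a) = ∫ x in Set.Ioi (s + a), f x := by
  have A : MeasurableEmbedding (fun x : ℝ => x + a) :=
    (Homeomorph.addRight a).isClosedEmbedding.measurableEmbedding
  have h := (measurePreserving_add_right volume a).setIntegral_preimage_emb A f (Set.Ioi (s + a))
  have hpre : (fun x : ℝ => x + a) ⁻¹' Set.Ioi (s + a) = Set.Ioi s := by
    ext x; simp [Set.mem_Ioi]
  rw [hpre] at h
  exact h

lemma keyexp {s : ℝ} (hs : 0 ≤ s) :
    ∫ t in Set.Ioi (0:ℝ), t * Real.exp (-(t + s) ^ 2 / 2)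
      ≤ cst * ∫ t in Set.Ioi (0:ℝ), Real.exp (-(t + s) ^ 2 / 2) := by
  have h1 : ∫ t in Set.Ioi (0:ℝ), t * Real.exp (-(t + s) ^ 2 / 2)
      = ∫ x in Set.Ioi s, (x - s) * Real.exp (-x ^ 2 / 2) := by
    have := shift_Ioi (fun x => (x - s) * Real.exp (-x ^ 2 / 2)) s 0
    simp only [add_sub_cancel_right, zero_add] at this
    exact this
  have h2 : ∫ t in Set.Ioi (0:ℝ), Real.exp (-(t + s) ^ 2 / 2) = Qg s := by
    have := shift_Ioi (fun x => Real.exp (-x ^ 2 / 2)) s 0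
    simp only [zero_add] at this
    exact this
  rw [h1, h2]
  have h3 : ∫ x in Set.Ioi s, (x - s) * Real.exp (-x ^ 2 / 2)
      = Real.exp (-s ^ 2 / 2) - s * Qg s := by
    have heq : (fun x : ℝ => (x - s) * Real.exp (-x ^ 2 / 2))
        = fun x => x * Real.exp (-x ^ 2 / 2) - s * Real.exp (-x ^ 2 / 2) :=
      funext fun x => by ring
    rw [heq, integral_sub inttexp.integrableOn ((intexp.const_mul s).integrableOn),
      integral_const_mul, FTC_texp]
    rfl
  rw [h3]
  have := key_Q hs
  nlinarith [Qg_nonneg s]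

/-! ### wgt and phi1 basics -/

lemma wgt_pos (y b : ℝ) : 0 < wgt y b := div_pos (Real.exp_pos _) (by positivity)

lemma wgt_le_one (y b : ℝ) : wgt y b ≤ 1 := by
  rw [wgt, div_le_one (by positivity)]
  linarith [(Real.exp_pos (-(y * b))).le]

lemma wgt_neg_eq (y b : ℝ) : wgt (-y) b = 1 - wgt y b := by
  unfold wgt
  rw [neg_mul, neg_neg]
  have h1 : Real.exp (y * b) + Real.exp (-(y * b)) > 0 := by positivity
  field_simp
  ring

lemma wgt_cont (b : ℝ) : Continuous fun y => wgt y b := by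
  unfold wgt
  refine Continuous.div (by continuity) (by continuity) fun y => ne_of_gt (by positivity)

lemma phi1_pos (x : ℝ) : 0 < phi1 x := by
  unfold phi1
  have := Real.pi_pos
  positivity

lemma phi1_cont : Continuous phi1 := by
  unfold phi1; continuity

lemma phi1_le {a b : ℝ} (h : a ^ 2 ≤ b ^ 2) : phi1 b ≤ phi1 a := by
  unfold phi1
  have := Real.pi_pos
  refine mul_le_mul_of_nonneg_left (Real.exp_le_exp.2 (by linarith)) (by positivity)

lemma int_phi1 (a : ℝ) : Integrable (fun y : ℝ => phi1 (y + a)) := by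
  have h := (intexp.comp_add_right a).const_mul (Real.sqrt (2 * π))⁻¹
  exact h.congr (Filter.Eventually.of_forall fun y => rfl)

lemma int_abs_phi1 (a : ℝ) : Integrable (fun y : ℝ => |y| * phi1 (y + a)) := by
  have h2 : Integrable (fun t : ℝ => |t| * phi1 t) := by
    refine (intexp4.const_mul (Real.sqrt (2 * π))⁻¹).mono' ?_
      (Filter.Eventually.of_forall fun t => ?_)
    · exact (continuous_abs.mul phi1_cont).aestronglyMeasurable
    · have hπ := Real.pi_pos
      rw [Real.norm_eq_abs, abs_of_nonneg (mul_nonneg (abs_nonneg t) (phi1_pos t).le)]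
      unfold phi1
      rw [show |t| * ((Real.sqrt (2*π))⁻¹ * Real.exp (-t^2/2))
          = (Real.sqrt (2*π))⁻¹ * (|t| * Real.exp (-t^2/2)) by ring]
      exact mul_le_mul_of_nonneg_left (abs_mul_exp_le t) (by positivity)
  have h1 : Integrable (fun y : ℝ => |y + a| * phi1 (y + a)) := h2.comp_add_right a
  have h3 : Integrable (fun y : ℝ => |y + a| * phi1 (y + a) + |a| * phi1 (y + a)) :=
    h1.add ((int_phi1 a).const_mul |a|)
  refine h3.mono' ?_ (Filter.Eventually.of_forall fun y => ?_)
  · exact (continuous_abs.mul (phi1_cont.comp (continuous_id.add continuous_const))).aestronglyMeasurable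
  · rw [Real.norm_eq_abs, abs_of_nonneg (mul_nonneg (abs_nonneg y) (phi1_pos _).le)]
    have h4 : |y| ≤ |y + a| + |a| := by
      calc |y| = |(y + a) + (-a)| := by ring_nf
        _ ≤ |y + a| + |-a| := abs_add_le _ _
        _ = |y + a| + |a| := by rw [abs_neg]
    nlinarith [phi1_pos (y + a), abs_nonneg (y + a), abs_nonneg a, abs_nonneg y]

lemma int_id_phi1 (a : ℝ) : Integrable (fun y : ℝ => y * phi1 (y + a)) := by
  refine (int_abs_phi1 a).mono' ?_ (Filter.Eventually.of_forall fun y => ?_)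
  · exact (continuous_id.mul (phi1_cont.comp (continuous_id.add continuous_const))).aestronglyMeasurable
  · rw [Real.norm_eq_abs, abs_mul, abs_of_nonneg (phi1_pos _).le]

lemma keyphi {s : ℝ} (hs : 0 ≤ s) :
    ∫ t in Set.Ioi (0:ℝ), t * phi1 (t + s)
      ≤ cst * ∫ t in Set.Ioi (0:ℝ), phi1 (t + s) := by
  have hπ := Real.pi_pos
  have hk : (0:ℝ) < (Real.sqrt (2 * π))⁻¹ := by positivity
  have e1 : ∫ t in Set.Ioi (0:ℝ), t * phi1 (t + s)
      = (Real.sqrt (2 * π))⁻¹ * ∫ t in Set.Ioi (0:ℝ), t * Real.exp (-(t + s) ^ 2 / 2) := by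
    rw [← integral_const_mul]
    refine setIntegral_congr_fun measurableSet_Ioi fun t _ => ?_
    unfold phi1; ring
  have e2 : ∫ t in Set.Ioi (0:ℝ), phi1 (t + s)
      = (Real.sqrt (2 * π))⁻¹ * ∫ t in Set.Ioi (0:ℝ), Real.exp (-(t + s) ^ 2 / 2) := by
    rw [← integral_const_mul]
    refine setIntegral_congr_fun measurableSet_Ioi fun t _ => ?_
    unfold phi1; ring
  rw [e1, e2]
  have := keyexp hs
  calc (Real.sqrt (2 * π))⁻¹ * ∫ t in Set.Ioi (0:ℝ), t * Real.exp (-(t + s) ^ 2 / 2)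
      ≤ (Real.sqrt (2 * π))⁻¹ * (cst * ∫ t in Set.Ioi (0:ℝ), Real.exp (-(t + s) ^ 2 / 2)) :=
        mul_le_mul_of_nonneg_left this hk.le
    _ = cst * ((Real.sqrt (2 * π))⁻¹ * ∫ t in Set.Ioi (0:ℝ), Real.exp (-(t + s) ^ 2 / 2)) := by
        ring

lemma split_halfline {f : ℝ → ℝ} (hf : Integrable f) :
    ∫ t, f t = ∫ t in Set.Ioi (0:ℝ), (f t + f (-t)) := by
  have h1 : ∫ t in Set.Iic (0:ℝ), f t = ∫ t in Set.Ioi (0:ℝ), f (-t) := by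
    have h := integral_comp_neg_Iic (0:ℝ) (fun x => f (-x))
    simp only [neg_neg, neg_zero] at h
    exact h
  rw [← intervalIntegral.integral_Iic_add_Ioi hf.integrableOn hf.integrableOn, h1, add_comm,
    ← integral_add hf.integrableOn hf.comp_neg.integrableOn]

/-- If `x_a ≥ x_θ ≥ 0` and `x_b ≥ 0` then `Γ/(2P) ≤ (x_a + √(2/π))/2`. -/
theorem stmt17 (xa xb xθ : ℝ) (hθ : 0 ≤ xθ) (ha : xθ ≤ xa) (hb : 0 ≤ xb) :
    Gfun xa xb xθ / (2 * Pfun xa xb xθ) ≤ (xa + Real.sqrt (2 / π)) / 2 := by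
  have hπ := Real.pi_pos
  set ρ : ℝ → ℝ := fun y => (phi1 (y - xθ) + phi1 (y + xθ)) / 2 with hρdef
  have hρpos : ∀ y, 0 < ρ y := fun y => by
    have h1 := phi1_pos (y - xθ); have h2 := phi1_pos (y + xθ)
    simp only [hρdef]; linarith
  have hρcont : Continuous ρ := by
    apply Continuous.div_const
    exact (phi1_cont.comp (continuous_id.sub continuous_const)).add
      (phi1_cont.comp (continuous_id.add continuous_const))
  have hρint : Integrable ρ := by
    refine (((int_phi1 (-xθ)).add (int_phi1 xθ)).div_const 2).congr
      (Filter.Eventually.of_forall fun y => ?_)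
    simp only [hρdef, sub_eq_add_neg, Pi.add_apply]
  have hρshiftint : Integrable (fun t => ρ (t + xa)) := by
    refine (((int_phi1 (xa - xθ)).add (int_phi1 (xa + xθ))).div_const 2).congr
      (Filter.Eventually.of_forall fun t => ?_)
    simp only [hρdef, Pi.add_apply]
    rw [show t + (xa - xθ) = t + xa - xθ by ring, show t + (xa + xθ) = t + xa + xθ by ring]
  have habsρ : Integrable (fun y => |y| * ρ y) := by
    refine (((int_abs_phi1 (-xθ)).add (int_abs_phi1 xθ)).div_const 2).congr
      (Filter.Eventually.of_forall fun y => ?_)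
    simp only [hρdef, sub_eq_add_neg, Pi.add_apply]; ring
  have habsρshift : Integrable (fun t => |t| * ρ (t + xa)) := by
    refine (((int_abs_phi1 (xa - xθ)).add (int_abs_phi1 (xa + xθ))).div_const 2).congr
      (Filter.Eventually.of_forall fun t => ?_)
    simp only [hρdef, Pi.add_apply]
    rw [show t + (xa - xθ) = t + xa - xθ by ring, show t + (xa + xθ) = t + xa + xθ by ring]
    ring
  have hPdef : Pfun xa xb xθ = ∫ y, wgt (y - xa) xb * ρ y := rfl
  have hGdef : Gfun xa xb xθ = ∫ y, wgt (y - xa) xb * y * ρ y := rfl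
  have hwcont : Continuous fun y : ℝ => wgt (y - xa) xb :=
    (wgt_cont xb).comp (continuous_id.sub continuous_const)
  have hfP : Integrable (fun y => wgt (y - xa) xb * ρ y) := by
    refine hρint.mono' (hwcont.mul hρcont).aestronglyMeasurable
      (Filter.Eventually.of_forall fun y => ?_)
    rw [Real.norm_eq_abs, abs_mul, abs_of_pos (wgt_pos _ _), abs_of_pos (hρpos y)]
    nlinarith [mul_nonneg (sub_nonneg.2 (wgt_le_one (y - xa) xb)) (hρpos y).le]
  have hfG : Integrable (fun y => wgt (y - xa) xb * y * ρ y) := by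
    refine habsρ.mono' ((hwcont.mul continuous_id).mul hρcont).aestronglyMeasurable
      (Filter.Eventually.of_forall fun y => ?_)
    rw [Real.norm_eq_abs, abs_mul, abs_mul, abs_of_pos (wgt_pos _ _), abs_of_pos (hρpos y)]
    nlinarith [mul_nonneg (mul_nonneg (sub_nonneg.2 (wgt_le_one (y - xa) xb)) (abs_nonneg y)) (hρpos y).le]
  have hgP : Integrable (fun t => wgt t xb * ρ (t + xa)) := by
    refine hρshiftint.mono'
      ((wgt_cont xb).mul (hρcont.comp (continuous_id.add continuous_const))).aestronglyMeasurable
      (Filter.Eventually.of_forall fun t => ?_)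
    rw [Real.norm_eq_abs, abs_mul, abs_of_pos (wgt_pos _ _), abs_of_pos (hρpos _)]
    nlinarith [mul_nonneg (sub_nonneg.2 (wgt_le_one t xb)) (hρpos (t + xa)).le]
  have hgG : Integrable (fun t => wgt t xb * t * ρ (t + xa)) := by
    refine habsρshift.mono'
      (((wgt_cont xb).mul continuous_id).mul
        (hρcont.comp (continuous_id.add continuous_const))).aestronglyMeasurable
      (Filter.Eventually.of_forall fun t => ?_)
    rw [Real.norm_eq_abs, abs_mul, abs_mul, abs_of_pos (wgt_pos _ _), abs_of_pos (hρpos _)]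
    nlinarith [mul_nonneg (mul_nonneg (sub_nonneg.2 (wgt_le_one t xb)) (abs_nonneg t)) (hρpos (t + xa)).le]
  have htρ : Integrable (fun t => t * ρ (t + xa)) := by
    refine habsρshift.mono'
      (continuous_id.mul (hρcont.comp (continuous_id.add continuous_const))).aestronglyMeasurable
      (Filter.Eventually.of_forall fun t => ?_)
    rw [Real.norm_eq_abs, abs_mul, abs_of_pos (hρpos _)]
  have hPpos : 0 < Pfun xa xb xθ := by
    rw [hPdef, integral_pos_iff_support_of_nonneg
      (fun y => le_of_lt (mul_pos (wgt_pos _ _) (hρpos y))) hfP]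
    have hsupp : Function.support (fun y => wgt (y - xa) xb * ρ y) = Set.univ :=
      Set.eq_univ_of_forall fun y => ne_of_gt (mul_pos (wgt_pos _ _) (hρpos y))
    rw [hsupp]
    simp
  have hPshift : Pfun xa xb xθ = ∫ t, wgt t xb * ρ (t + xa) := by
    rw [hPdef, ← integral_add_right_eq_self (fun y => wgt (y - xa) xb * ρ y) xa]
    simp only [add_sub_cancel_right]
  have hGshift : Gfun xa xb xθ - xa * Pfun xa xb xθ = ∫ t, wgt t xb * t * ρ (t + xa) := by
    have h1 : xa * Pfun xa xb xθ = ∫ y, xa * (wgt (y - xa) xb * ρ y) := by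
      rw [hPdef, integral_const_mul]
    rw [hGdef, h1, ← integral_sub hfG (hfP.const_mul xa)]
    have h2 : (fun y => wgt (y - xa) xb * y * ρ y - xa * (wgt (y - xa) xb * ρ y))
        = fun y => wgt (y - xa) xb * (y - xa) * ρ y := funext fun y => by ring
    rw [h2, ← integral_add_right_eq_self (fun y => wgt (y - xa) xb * (y - xa) * ρ y) xa]
    simp only [add_sub_cancel_right]
  have hmono : ∀ t : ℝ, 0 ≤ t → ρ (t + xa) ≤ ρ (-t + xa) := by
    intro t ht
    have h1 : phi1 (t + xa - xθ) ≤ phi1 (-t + xa - xθ) :=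
      phi1_le (by nlinarith [mul_nonneg ht (sub_nonneg.2 ha)])
    have h2 : phi1 (t + xa + xθ) ≤ phi1 (-t + xa + xθ) :=
      phi1_le (by nlinarith [mul_nonneg ht (show (0:ℝ) ≤ xa + xθ by linarith)])
    simp only [hρdef]
    linarith
  have hPge : ∫ t in Set.Ioi (0:ℝ), ρ (t + xa) ≤ Pfun xa xb xθ := by
    rw [hPshift, split_halfline hgP]
    refine setIntegral_mono_on hρshiftint.integrableOn
      (hgP.add hgP.comp_neg).integrableOn measurableSet_Ioi fun t ht => ?_
    rw [Set.mem_Ioi] at ht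
    simp only [wgt_neg_eq]
    nlinarith [wgt_le_one t xb, hmono t ht.le, wgt_pos t xb, hρpos (t + xa), hρpos (-t + xa)]
  have hGle : Gfun xa xb xθ - xa * Pfun xa xb xθ ≤ ∫ t in Set.Ioi (0:ℝ), t * ρ (t + xa) := by
    rw [hGshift, split_halfline hgG]
    refine setIntegral_mono_on (hgG.add hgG.comp_neg).integrableOn htρ.integrableOn
      measurableSet_Ioi fun t ht => ?_
    rw [Set.mem_Ioi] at ht
    nlinarith [mul_nonneg (mul_nonneg (wgt_pos (-t) xb).le ht.le) (hρpos (-t + xa)).le,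
      mul_nonneg (mul_nonneg (sub_nonneg.2 (wgt_le_one t xb)) ht.le) (hρpos (t + xa)).le]
  have e1 : ∫ t in Set.Ioi (0:ℝ), t * ρ (t + xa)
      = ((∫ t in Set.Ioi (0:ℝ), t * phi1 (t + (xa - xθ)))
        + ∫ t in Set.Ioi (0:ℝ), t * phi1 (t + (xa + xθ))) / 2 := by
    rw [← integral_add (int_id_phi1 (xa - xθ)).integrableOn (int_id_phi1 (xa + xθ)).integrableOn,
      ← integral_div]
    refine setIntegral_congr_fun measurableSet_Ioi fun t _ => ?_
    simp only [hρdef]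
    rw [show t + (xa - xθ) = t + xa - xθ by ring, show t + (xa + xθ) = t + xa + xθ by ring]
    ring
  have e2 : ∫ t in Set.Ioi (0:ℝ), ρ (t + xa)
      = ((∫ t in Set.Ioi (0:ℝ), phi1 (t + (xa - xθ)))
        + ∫ t in Set.Ioi (0:ℝ), phi1 (t + (xa + xθ))) / 2 := by
    rw [← integral_add (int_phi1 (xa - xθ)).integrableOn (int_phi1 (xa + xθ)).integrableOn,
      ← integral_div]
    refine setIntegral_congr_fun measurableSet_Ioi fun t _ => ?_
    simp only [hρdef]
    rw [show t + (xa - xθ) = t + xa - xθ by ring, show t + (xa + xθ) = t + xa + xθ by ring]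
  have boundKey : ∫ t in Set.Ioi (0:ℝ), t * ρ (t + xa)
      ≤ cst * ∫ t in Set.Ioi (0:ℝ), ρ (t + xa) := by
    rw [e1, e2]
    have k1 := keyphi (show (0:ℝ) ≤ xa - xθ by linarith)
    have k2 := keyphi (show (0:ℝ) ≤ xa + xθ by linarith)
    linarith
  have hfinal : Gfun xa xb xθ ≤ (xa + cst) * Pfun xa xb xθ := by
    have h3 : cst * ∫ t in Set.Ioi (0:ℝ), ρ (t + xa) ≤ cst * Pfun xa xb xθ :=
      mul_le_mul_of_nonneg_left hPge cst_pos.le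
    nlinarith [hGle, boundKey]
  rw [show Real.sqrt (2 / π) = cst from rfl]
  rw [div_le_div_iff₀ (by linarith : (0:ℝ) < 2 * Pfun xa xb xθ) (by norm_num : (0:ℝ) < 2)]
  nlinarith [hPpos, hfinal]
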